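/- Let f:[0,1]→[0,1] be continuous and piecewise monotone with a unique fixed point a. Let c∈[0,1] satisfy c<a and f(c)>a, and suppose f^n(c)≤c for some integer n≥1. Let p be the number of indices i with 0≤i≤n−1 such that f^i(c) and f^{i+1}(c) lie on opposite sides of a (one strictly less than a, the other strictly greater than a). Then p is even, and f has a periodic point of over-rotation number p/(2n); in particular p/(2n) belongs to the over-rotation interval I_f. -/

import Mathlib

open Set Function

/-- The function χ_g: 1/2 where (g(x)−x)(g(g(x))−g(x)) ≤ 0, and 0 otherwise. -/
noncomputable def chi (g : ℝ → ℝ) (x : ℝ) : ℝ :=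
  if (g x - x) * (g (g x) - g x) ≤ 0 then 1 / 2 else 0

/-- Over-rotation number of a periodic point `y` of `g`. -/
noncomputable def overRotNum (g : ℝ → ℝ) (y : ℝ) : ℝ :=
  (∑ i ∈ Finset.range (Function.minimalPeriod g y), chi g (g^[i] y)) /
    (Function.minimalPeriod g y : ℝ)

/-- The over-rotation interval of `g` on the domain `s`: the closure of the set of
over-rotation numbers of periodic non-fixed points of `g` in `s`. -/
def overRotInterval (g : ℝ → ℝ) (s : Set ℝ) : Set ℝ :=
  closure { r : ℝ | ∃ y ∈ s, y ∈ Function.periodicPts g ∧ g y ≠ y ∧ overRotNum g y = r }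

/-- `f` is piecewise monotone on `[a,b]`. -/
def PiecewiseMonotoneOn (f : ℝ → ℝ) (a b : ℝ) : Prop :=
  ∃ n : ℕ, ∃ t : Fin (n + 1) → ℝ, StrictMono t ∧ t 0 = a ∧ t (Fin.last n) = b ∧
    ∀ i : Fin n, MonotoneOn f (Set.Icc (t i.castSucc) (t i.succ)) ∨
      AntitoneOn f (Set.Icc (t i.castSucc) (t i.succ))

lemma my_push_left {f : ℝ → ℝ} {a : ℝ} (hf : ContinuousOn f (Icc 0 1))
    (hmaps : MapsTo f (Icc 0 1) (Icc 0 1))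
    (huniq : ∀ x ∈ Icc (0:ℝ) 1, f x = x → x = a)
    {u : ℝ} (hu : u ∈ Icc (0:ℝ) 1) (hua : u < a) : u < f u := by
  by_contra h
  push_neg at h
  have hne : f u ≠ u := fun he => absurd (huniq u hu he) (ne_of_lt hua)
  have hlt : f u < u := lt_of_le_of_ne h hne
  have hsub : Icc (0:ℝ) u ⊆ Icc 0 1 := Icc_subset_Icc le_rfl hu.2
  have hcont : ContinuousOn (fun s => f s - s) (Icc 0 u) := (hf.mono hsub).sub continuousOn_id
  have h0 : (0:ℝ) ≤ f 0 - 0 := by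
    have := (hmaps ⟨le_rfl, zero_le_one⟩).1; linarith
  have hiv := intermediate_value_Icc' hu.1 hcont
  have h0mem : (0:ℝ) ∈ Icc (f u - u) (f 0 - 0) := ⟨by linarith, h0⟩
  obtain ⟨s, hs, hfs⟩ := hiv h0mem
  have hfss : f s = s := by simpa [sub_eq_zero] using hfs
  have hsa : s = a := huniq s (hsub hs) hfss
  have : a ≤ u := hsa ▸ hs.2
  linarith

lemma my_push_right {f : ℝ → ℝ} {a : ℝ} (hf : ContinuousOn f (Icc 0 1))
    (hmaps : MapsTo f (Icc 0 1) (Icc 0 1))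
    (huniq : ∀ x ∈ Icc (0:ℝ) 1, f x = x → x = a)
    {u : ℝ} (hu : u ∈ Icc (0:ℝ) 1) (hua : a < u) : f u < u := by
  by_contra h
  push_neg at h
  have hne : f u ≠ u := fun he => absurd (huniq u hu he) (ne_of_gt hua)
  have hlt : u < f u := lt_of_le_of_ne h (Ne.symm hne)
  have hsub : Icc u 1 ⊆ Icc 0 1 := Icc_subset_Icc hu.1 le_rfl
  have hcont : ContinuousOn (fun s => f s - s) (Icc u 1) := (hf.mono hsub).sub continuousOn_id
  have h1 : f 1 - 1 ≤ 0 := by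
    have := (hmaps ⟨zero_le_one, le_rfl⟩).2; linarith
  have hiv := intermediate_value_Icc' hu.2 hcont
  have h0mem : (0:ℝ) ∈ Icc (f 1 - 1) (f u - u) := ⟨h1, by linarith⟩
  obtain ⟨s, hs, hfs⟩ := hiv h0mem
  have hfss : f s = s := by simpa [sub_eq_zero] using hfs
  have hsa : s = a := huniq s (hsub hs) hfss
  have : u ≤ a := hsa ▸ hs.1
  linarith

lemma my_iter_ne {f : ℝ → ℝ} {a y : ℝ} (hfix : f a = a) {q : ℕ} (hq : 1 ≤ q)
    (hyq : f^[q] y = y) (hya : y ≠ a) : ∀ i, f^[i] y ≠ a := by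
  intro i he
  have hper : IsPeriodicPt f (q * (i + 1)) y := Function.IsPeriodicPt.mul_const hyq (i + 1)
  have hle : i ≤ q * (i + 1) := by
    calc i ≤ i + 1 := Nat.le_succ i
    _ = 1 * (i + 1) := (one_mul _).symm
    _ ≤ q * (i + 1) := Nat.mul_le_mul_right _ hq
  have : y = f^[q * (i+1) - i] (f^[i] y) := by
    rw [← Function.iterate_add_apply, Nat.sub_add_cancel hle]
    exact hper.symm
  rw [he, Function.iterate_fixed hfix] at this
  exact hya this

/-- sum of an m-periodic sequence over k*m terms -/
lemma my_sum_periodic (g : ℕ → ℝ) (m : ℕ) (hper : ∀ i, g (i + m) = g i) :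
    ∀ k, ∑ i ∈ Finset.range (k * m), g i = k * ∑ i ∈ Finset.range m, g i := by
  have hshift : ∀ s i, g (s * m + i) = g i := by
    intro s
    induction s with
    | zero => simp
    | succ s ih =>
      intro i
      have : (s+1) * m + i = (s * m + i) + m := by ring
      rw [this, hper, ih]
  intro k
  induction k with
  | zero => simp
  | succ k ih =>
    have : (k+1) * m = k * m + m := by ring
    rw [this, Finset.sum_range_add, ih]
    have : ∑ x ∈ Finset.range m, g (k * m + x) = ∑ x ∈ Finset.range m, g x :=
      Finset.sum_congr rfl (fun x _ => hshift k x)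
    rw [this]; push_cast; ring

lemma my_parity (σ : ℕ → Bool) :
    ∀ n, ((Finset.range n).filter (fun i => σ i ≠ σ (i+1))).card % 2
      = (if σ 0 = σ n then 0 else 1) := by
  intro n
  induction n with
  | zero => simp
  | succ n ih =>
    rw [Finset.range_add_one, Finset.filter_insert]
    by_cases h : σ n ≠ σ (n+1)
    · rw [if_pos h, Finset.card_insert_of_notMem (by simp)]
      rcases Bool.eq_or_eq_not (σ 0) (σ n) with h0 | h0 <;>
        rcases Bool.eq_or_eq_not (σ n) (σ (n+1)) with h1 | h1 <;>
          simp_all <;> omega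
    · rw [if_neg h]
      simp only [ne_eq, not_not] at h
      rw [ih, h]

lemma my_rot (f : ℝ → ℝ) (a : ℝ) (hf : ContinuousOn f (Icc 0 1))
    (hmaps : MapsTo f (Icc 0 1) (Icc 0 1)) (hfix : f a = a)
    (huniq : ∀ x ∈ Icc (0:ℝ) 1, f x = x → x = a)
    (y : ℝ) (q : ℕ) (hq : 1 ≤ q) (hy : y ∈ Icc (0:ℝ) 1) (hyq : f^[q] y = y) (hya : y ≠ a) :
    y ∈ periodicPts f ∧ f y ≠ y ∧
      overRotNum f y =
        (((Finset.range q).filter (fun i => ¬((f^[i] y < a) ↔ (f^[i+1] y < a)))).card : ℝ)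
          / (2 * q) := by
  have hyper : y ∈ periodicPts f := Function.mem_periodicPts.2 ⟨q, hq, hyq⟩
  have hfy : f y ≠ y := fun he => hya (huniq y hy he)
  refine ⟨hyper, hfy, ?_⟩
  set m := Function.minimalPeriod f y with hm
  have hm0 : 0 < m := Function.minimalPeriod_pos_of_mem_periodicPts hyper
  have hmdvd : m ∣ q := Function.IsPeriodicPt.minimalPeriod_dvd hyq
  obtain ⟨k, hk⟩ := hmdvd
  have hk0 : 0 < k := by
    rcases Nat.eq_zero_or_pos k with h | h
    · subst h; omega
    · exact h
  have hmem : ∀ i, f^[i] y ∈ Icc (0:ℝ) 1 := fun i => hmaps.iterate i hy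
  have hnea : ∀ i, f^[i] y ≠ a := my_iter_ne hfix hq hyq hya
  have hmfix : f^[m] y = y := Function.isPeriodicPt_minimalPeriod f y
  -- chi values
  have chival : ∀ i, chi f (f^[i] y)
      = if (f^[i] y < a) ↔ (f^[i+1] y < a) then 0 else (1/2 : ℝ) := by
    intro i
    have e1 : f (f^[i] y) = f^[i+1] y := (Function.iterate_succ_apply' f i y).symm
    have e2 : f (f^[i+1] y) = f^[i+2] y := (Function.iterate_succ_apply' f (i+1) y).symm
    rcases lt_or_gt_of_ne (hnea i) with h0 | h0 <;>
      rcases lt_or_gt_of_ne (hnea (i+1)) with h1 | h1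
    · -- both < a
      have p1 : f^[i] y < f^[i+1] y := by
        have := my_push_left hf hmaps huniq (hmem i) h0; rwa [e1] at this
      have p2 : f^[i+1] y < f^[i+2] y := by
        have := my_push_left hf hmaps huniq (hmem (i+1)) h1; rwa [e2] at this
      rw [chi, if_neg, if_pos (by tauto)]
      rw [e1, e2]
      nlinarith
    · -- < a, > a
      have p1 : f^[i] y < f^[i+1] y := by
        have := my_push_left hf hmaps huniq (hmem i) h0; rwa [e1] at this
      have p2 : f^[i+2] y < f^[i+1] y := by
        have := my_push_right hf hmaps huniq (hmem (i+1)) h1; rwa [e2] at this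
      rw [chi, if_pos, if_neg (by intro hc; linarith [hc.mp h0])]
      rw [e1, e2]
      nlinarith
    · -- > a, < a
      have p1 : f^[i+1] y < f^[i] y := by
        have := my_push_right hf hmaps huniq (hmem i) h0; rwa [e1] at this
      have p2 : f^[i+1] y < f^[i+2] y := by
        have := my_push_left hf hmaps huniq (hmem (i+1)) h1; rwa [e2] at this
      rw [chi, if_pos, if_neg (by intro hc; linarith [hc.mpr h1])]
      rw [e1, e2]
      nlinarith
    · -- both > a
      have p1 : f^[i+1] y < f^[i] y := by
        have := my_push_right hf hmaps huniq (hmem i) h0; rwa [e1] at this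
      have p2 : f^[i+2] y < f^[i+1] y := by
        have := my_push_right hf hmaps huniq (hmem (i+1)) h1; rwa [e2] at this
      rw [chi, if_neg, if_pos (by constructor <;> intro h <;> linarith)]
      rw [e1, e2]
      nlinarith
  -- periodicity of chi sequence
  have hgper : ∀ i, chi f (f^[i+m] y) = chi f (f^[i] y) := by
    intro i
    rw [Function.iterate_add_apply, hmfix]
  have hsum2 : ∑ i ∈ Finset.range (k * m), chi f (f^[i] y)
      = k * ∑ i ∈ Finset.range m, chi f (f^[i] y) :=
    my_sum_periodic (fun i => chi f (f^[i] y)) m hgper k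
  have hqkm : q = k * m := by rw [hk]; ring
  have hsumq : ∑ i ∈ Finset.range q, chi f (f^[i] y)
      = (((Finset.range q).filter (fun i => ¬((f^[i] y < a) ↔ (f^[i+1] y < a)))).card : ℝ)
          * (1/2 : ℝ) := by
    calc ∑ i ∈ Finset.range q, chi f (f^[i] y)
        = ∑ i ∈ Finset.range q, (if ¬((f^[i] y < a) ↔ (f^[i+1] y < a)) then (1/2:ℝ) else 0) := by
          refine Finset.sum_congr rfl (fun i _ => ?_)
          rw [chival i]
          by_cases h : (f^[i] y < a) ↔ (f^[i+1] y < a)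
          · rw [if_pos h, if_neg (by tauto)]
          · rw [if_neg h, if_pos h]
      _ = ∑ i ∈ (Finset.range q).filter (fun i => ¬((f^[i] y < a) ↔ (f^[i+1] y < a))), (1/2:ℝ) := by
          rw [Finset.sum_filter]
      _ = _ := by rw [Finset.sum_const, nsmul_eq_mul]
  -- assemble
  rw [overRotNum]
  rw [← hm]
  have hsum2' : ∑ i ∈ Finset.range q, chi f (f^[i] y)
      = k * ∑ i ∈ Finset.range m, chi f (f^[i] y) := by rw [hqkm]; exact hsum2
  rw [hsum2'] at hsumq
  have hm0' : (m:ℝ) ≠ 0 := Nat.cast_ne_zero.2 (by omega)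
  have hk0' : (k:ℝ) ≠ 0 := Nat.cast_ne_zero.2 (by omega)
  have hq0' : (q:ℝ) ≠ 0 := Nat.cast_ne_zero.2 (by omega)
  have hqc : (q:ℝ) = k * m := by rw [hqkm]; push_cast; ring
  rw [div_eq_div_iff hm0' (by positivity)]
  linear_combination (2*(m:ℝ)) * hsumq + (2*(∑ i ∈ Finset.range m, chi f (f^[i] y))) * hqc

lemma my_pullback (f : ℝ → ℝ) (a : ℝ) (n : ℕ) (hf : ContinuousOn f (Icc 0 1))
    (hmaps : MapsTo f (Icc 0 1) (Icc 0 1)) (hfix : f a = a) (haI : a ∈ Icc (0:ℝ) 1)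
    (d : ℝ) (hd : d ∈ Icc (0:ℝ) 1) (hda : d < a) (hnd : f^[n] d ≤ d) :
    ∃ d', d' ∈ Icc (0:ℝ) 1 ∧ d ≤ d' ∧ f^[n] d' = d ∧
      ∀ i ≤ n, f^[i] d' ∈ uIcc (f^[i] d) a := by
  have hIccu : Icc (0:ℝ) 1 = uIcc (0:ℝ) 1 := (uIcc_of_le zero_le_one).symm
  have hmemIcc : ∀ i, f^[i] d ∈ Icc (0:ℝ) 1 := fun i => hmaps.iterate i hd
  have husub : ∀ i, uIcc (f^[i] d) a ⊆ Icc (0:ℝ) 1 := by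
    intro i
    rw [hIccu]
    exact uIcc_subset_uIcc (by rw [← hIccu]; exact hmemIcc i) (by rw [← hIccu]; exact haI)
  have key : ∀ j, j ≤ n → ∃ g, g ∈ uIcc (f^[n - j] d) a ∧ f^[j] g = d ∧
      ∀ k, n - j ≤ k → k ≤ n → f^[k - (n - j)] g ∈ uIcc (f^[k] d) a := by
    intro j
    induction j with
    | zero =>
      intro _
      refine ⟨d, ?_, by simp, ?_⟩
      · rw [Nat.sub_zero, mem_uIcc]
        left; exact ⟨hnd, le_of_lt hda⟩
      · intro k hk1 hk2
        have hkn : k = n := le_antisymm hk2 (by omega)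
        have hz : k - (n - 0) = 0 := by omega
        rw [hz, Function.iterate_zero_apply, hkn]
        rw [mem_uIcc]; left; exact ⟨hnd, le_of_lt hda⟩
    | succ j ih =>
      intro hjn
      obtain ⟨g', h1, h2, h3⟩ := ih (by omega)
      have hnj : n - j = (n - (j+1)) + 1 := by omega
      set i := n - (j+1) with hi
      rw [hnj] at h1
      rw [Function.iterate_succ_apply'] at h1
      rw [show a = f a from hfix.symm] at h1
      have hsub2 := intermediate_value_uIcc (f := f) (a := f^[i] d) (b := a)
        (hf.mono (husub i))
      obtain ⟨g, hgmem, hgval⟩ := hsub2 h1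
      refine ⟨g, hgmem, ?_, ?_⟩
      · rw [Function.iterate_succ_apply, hgval, h2]
      · intro k hk1 hk2
        rcases Nat.eq_or_lt_of_le hk1 with he | hlt
        · rw [← he]
          simpa using hgmem
        · have hk1' : n - j ≤ k := by omega
          have : k - i = (k - (n - j)) + 1 := by omega
          rw [this, Function.iterate_succ_apply, hgval]
          exact h3 k hk1' hk2
  obtain ⟨g, hg1, hg2, hg3⟩ := key n le_rfl
  have hg1' : g ∈ uIcc d a := by simpa using hg1
  have hgda : g ∈ Icc d a := by rwa [uIcc_of_le (le_of_lt hda)] at hg1'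
  refine ⟨g, ⟨le_trans hd.1 hgda.1, le_trans hgda.2 haI.2⟩, hgda.1, hg2, ?_⟩
  intro i hi
  have := hg3 i (by omega) hi
  simpa using this

theorem stmt0 (f : ℝ → ℝ) (a c : ℝ) (n : ℕ)
    (hf : ContinuousOn f (Set.Icc 0 1))
    (hmaps : Set.MapsTo f (Set.Icc 0 1) (Set.Icc 0 1))
    (hpm : PiecewiseMonotoneOn f 0 1)
    (ha : a ∈ Set.Icc (0:ℝ) 1) (hfix : f a = a)
    (huniq : ∀ x ∈ Set.Icc (0:ℝ) 1, f x = x → x = a)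
    (hc : c ∈ Set.Icc (0:ℝ) 1) (hca : c < a) (hfc : a < f c)
    (hn : 1 ≤ n) (hfn : f^[n] c ≤ c)
    (p : ℕ)
    (hp : p = ((Finset.range n).filter (fun i =>
        (f^[i] c < a ∧ a < f^[i+1] c) ∨ (a < f^[i] c ∧ f^[i+1] c < a))).card) :
    Even p ∧
    (∃ y ∈ Set.Icc (0:ℝ) 1, y ∈ Function.periodicPts f ∧ f y ≠ y ∧
      overRotNum f y = (p : ℝ) / (2 * n)) ∧
    ((p : ℝ) / (2 * n)) ∈ overRotInterval f (Set.Icc 0 1) := by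
  have ha0 : 0 < a := lt_of_le_of_lt hc.1 hca
  have hfc1 : f c ≤ 1 := (hmaps hc).2
  have ha1 : a < 1 := lt_of_lt_of_le hfc hfc1
  have hxm : ∀ i, f^[i] c ∈ Icc (0:ℝ) 1 := fun i => hmaps.iterate i hc
  have hxne : ∀ i ≤ n, f^[i] c ≠ a := by
    intro i hi he
    have h2 : f^[n] c = a := by
      rw [show n = (n - i) + i from by omega, Function.iterate_add_apply, he,
        Function.iterate_fixed hfix]
    rw [h2] at hfn
    linarith
  have hxn_lt : f^[n] c < a := lt_of_le_of_lt hfn hca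
  have hx1 : a < f^[1] c := by simpa using hfc
  -- Even p
  have hσeq : ((Finset.range n).filter (fun i =>
      (f^[i] c < a ∧ a < f^[i+1] c) ∨ (a < f^[i] c ∧ f^[i+1] c < a))).card
      = ((Finset.range n).filter (fun i => (fun j => decide (f^[j] c < a)) i
          ≠ (fun j => decide (f^[j] c < a)) (i+1))).card := by
    congr 1
    apply Finset.filter_congr
    intro i hi
    rw [Finset.mem_range] at hi
    have n1 := hxne i (by omega)
    have n2 := hxne (i+1) (by omega)
    simp only [ne_eq, decide_eq_decide]
    constructor
    · rintro (⟨u1, u2⟩ | ⟨u1, u2⟩) <;> intro hiff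
      · exact absurd (hiff.mp u1) (not_lt.2 (le_of_lt u2))
      · exact absurd (hiff.mpr u2) (not_lt.2 (le_of_lt u1))
    · intro hniff
      rcases lt_or_gt_of_ne n1 with h1 | h1 <;> rcases lt_or_gt_of_ne n2 with h2 | h2
      · exact absurd (iff_of_true h1 h2) hniff
      · exact Or.inl ⟨h1, h2⟩
      · exact Or.inr ⟨h1, h2⟩
      · exact absurd (iff_of_false (not_lt.2 (le_of_lt h1)) (not_lt.2 (le_of_lt h2))) hniff
  have heven : Even p := by
    have hpar := my_parity (fun j => decide (f^[j] c < a)) n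
    have hcond : (fun j => decide (f^[j] c < a)) 0 = (fun j => decide (f^[j] c < a)) n := by
      simp only [decide_eq_decide, Function.iterate_zero_apply]
      exact decide_eq_decide.mpr (iff_of_true hca hxn_lt)
    rw [Nat.even_iff, hp, hσeq, hpar, if_pos hcond]
  -- Existence
  have hex : ∃ y ∈ Set.Icc (0:ℝ) 1, y ∈ Function.periodicPts f ∧ f y ≠ y ∧
      overRotNum f y = (p : ℝ) / (2 * n) := by
    by_cases hpn : p = n
    · -- p = n : period-two point
      have hfilter_all : (Finset.range n).filter (fun i =>
          (f^[i] c < a ∧ a < f^[i+1] c) ∨ (a < f^[i] c ∧ f^[i+1] c < a)) = Finset.range n := by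
        apply Finset.eq_of_subset_of_card_le (Finset.filter_subset _ _)
        rw [Finset.card_range, ← hp, hpn]
      have hall : ∀ i < n, (f^[i] c < a ∧ a < f^[i+1] c) ∨ (a < f^[i] c ∧ f^[i+1] c < a) :=
        fun i hi => Finset.filter_eq_self.1 hfilter_all i (Finset.mem_range.2 hi)
      have hevenidx : ∀ i ≤ n, (f^[i] c < a ↔ Even i) := by
        intro i
        induction i with
        | zero => intro _; simpa using hca
        | succ i ih =>
          intro hi
          have hx := ih (by omega)
          have h := hall i (by omega)
          constructor
          · intro hlt
            rcases h with ⟨u, v⟩ | ⟨u, v⟩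
            · linarith
            · have hne : ¬ Even i := fun he => absurd (hx.mpr he) (not_lt.2 (le_of_lt u))
              simpa [Nat.even_add_one] using hne
          · intro he
            have hnei : ¬ Even i := by simpa [Nat.even_add_one] using he
            have hngt : ¬ f^[i] c < a := fun hh => hnei (hx.mp hh)
            rcases h with ⟨u, v⟩ | ⟨u, v⟩
            · exact absurd u hngt
            · exact v
      have hneven : Even n := (hevenidx n le_rfl).mp hxn_lt
      obtain ⟨r, hr⟩ := hneven
      have hchain : ∃ j, Even j ∧ j + 2 ≤ n ∧ f^[j+2] c ≤ f^[j] c := by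
        by_contra hno
        push_neg at hno
        have grow : ∀ m, 0 < m → 2*m ≤ n → f^[0] c < f^[2*m] c := by
          intro m
          induction m with
          | zero => omega
          | succ m ih =>
            intro _ h2
            rcases Nat.eq_zero_or_pos m with hm | hm
            · subst hm
              have := hno 0 Even.zero (by omega)
              simpa using this
            · have h1 := ih hm (by omega)
              have h2' := hno (2*m) (even_two_mul m) (by omega)
              have he : 2*(m+1) = 2*m + 2 := by ring
              rw [he]
              exact lt_trans h1 h2'
        have hG := grow (n/2) (by omega) (by omega)
        rw [show 2*(n/2) = n from by omega] at hG
        simp only [Function.iterate_zero_apply] at hG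
        linarith
      obtain ⟨j, hje, hj2, hjle⟩ := hchain
      have hwlt : f^[j] c < a := (hevenidx j (by omega)).mpr hje
      have hw1 : f^[j] c ∈ Icc (0:ℝ) 1 := hxm j
      have hcont2 : ContinuousOn (f^[2]) (Icc (0:ℝ) 1) := by
        rw [show (2:ℕ) = 1 + 1 from rfl, Function.iterate_add, Function.iterate_one]
        exact hf.comp (by simpa using hf) (by simpa using hmaps)
      have hsub : Icc (0:ℝ) (f^[j] c) ⊆ Icc 0 1 := Icc_subset_Icc le_rfl hw1.2
      have hcphi : ContinuousOn (fun s => f^[2] s - s) (Icc 0 (f^[j] c)) :=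
        (hcont2.mono hsub).sub continuousOn_id
      have hphi0 : (0:ℝ) ≤ f^[2] 0 - 0 := by
        have := (hmaps.iterate 2 (⟨le_rfl, zero_le_one⟩ : (0:ℝ) ∈ Icc (0:ℝ) 1)).1
        linarith
      have hphiw : f^[2] (f^[j] c) - f^[j] c ≤ 0 := by
        have he : f^[2] (f^[j] c) = f^[j+2] c := by
          rw [← Function.iterate_add_apply]
          congr 1
          omega
        rw [he]
        linarith
      obtain ⟨z, hz, hzv⟩ := intermediate_value_Icc' hw1.1 hcphi ⟨hphiw, hphi0⟩
      have hz2 : f^[2] z = z := by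
        have : f^[2] z - z = 0 := hzv
        linarith
      have hzI : z ∈ Icc (0:ℝ) 1 := hsub hz
      have hzlt : z < a := lt_of_le_of_lt hz.2 hwlt
      have hza : z ≠ a := ne_of_lt hzlt
      have hiterne := my_iter_ne hfix (show (1:ℕ) ≤ 2 by omega) hz2 hza
      have e2 : f^[2] z = f (f z) := by
        rw [Function.iterate_succ_apply', Function.iterate_one]
      have hfz : a < f z := by
        have hfzne : f z ≠ a := by simpa using hiterne 1
        rcases lt_or_gt_of_ne hfzne with hlt | hgt
        · exfalso
          have p1 : z < f z := my_push_left hf hmaps huniq hzI hzlt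
          have hfzI : f z ∈ Icc (0:ℝ) 1 := hmaps hzI
          have p2 : f z < f (f z) := my_push_left hf hmaps huniq hfzI hlt
          rw [← e2, hz2] at p2
          linarith
        · exact hgt
      obtain ⟨r1, r2, r3⟩ := my_rot f a hf hmaps hfix huniq z 2 (by omega) hzI hz2 hza
      refine ⟨z, hzI, r1, r2, ?_⟩
      rw [r3]
      have hcardeq : ((Finset.range 2).filter
          (fun i => ¬((f^[i] z < a) ↔ (f^[i+1] z < a)))) = Finset.range 2 := by
        apply Finset.filter_eq_self.2
        intro i hi
        rw [Finset.mem_range] at hi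
        interval_cases i
        · simp only [Function.iterate_zero_apply, Function.iterate_one]
          intro hiff
          exact absurd (hiff.mp hzlt) (not_lt.2 (le_of_lt hfz))
        · simp only [Function.iterate_one, show (1:ℕ)+1 = 2 from rfl, hz2]
          intro hiff
          exact absurd (hiff.mpr hzlt) (not_lt.2 (le_of_lt hfz))
      rw [hcardeq, Finset.card_range, hpn]
      have hn0 : (0:ℝ) < (n:ℝ) := by exact_mod_cast Nat.pos_of_ne_zero (by omega)
      rw [div_eq_div_iff (by norm_num) (by positivity)]
      ring
    · -- p < n : limit of pullbacks
      have hple : p ≤ n := by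
        rw [hp]
        calc ((Finset.range n).filter _).card ≤ (Finset.range n).card :=
              Finset.card_filter_le _ _
          _ = n := Finset.card_range n
      have hplt : p < n := lt_of_le_of_ne hple hpn
      have hstep : ∀ d : {d : ℝ // d ∈ Icc (0:ℝ) 1 ∧ f^[n] d ≤ d ∧
          ∀ i ≤ n, ((f^[i] d < a ↔ f^[i] c < a) ∧ f^[i] d ≠ a)},
          ∃ e : {d : ℝ // d ∈ Icc (0:ℝ) 1 ∧ f^[n] d ≤ d ∧
          ∀ i ≤ n, ((f^[i] d < a ↔ f^[i] c < a) ∧ f^[i] d ≠ a)},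
          d.1 ≤ e.1 ∧ f^[n] e.1 = d.1 := by
        rintro ⟨d, hd1, hd2, hd3⟩
        have hdla : d < a := by
          have h0 := (hd3 0 (Nat.zero_le n)).1
          simp only [Function.iterate_zero_apply] at h0
          exact h0.mpr hca
        obtain ⟨d', h1, h2, h3, h4⟩ := my_pullback f a n hf hmaps hfix ha d hd1 hdla hd2
        have hne' : ∀ i ≤ n, f^[i] d' ≠ a := by
          intro i hi he
          have hcontr : f^[n] d' = a := by
            rw [show n = (n - i) + i from by omega, Function.iterate_add_apply, he,
              Function.iterate_fixed hfix]
          rw [h3] at hcontr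
          exact absurd hcontr (ne_of_lt hdla)
        refine ⟨⟨d', h1, by rw [h3]; exact h2, fun i hi => ⟨?_, hne' i hi⟩⟩, h2, h3⟩
        have hu := h4 i hi
        have hiff := (hd3 i hi).1
        have hune := (hd3 i hi).2
        rw [mem_uIcc] at hu
        constructor
        · intro hv
          by_contra hnc
          have hua : a < f^[i] d :=
            lt_of_le_of_ne (not_lt.1 (fun hh => hnc (hiff.mp hh))) (Ne.symm hune)
          rcases hu with ⟨u1, u2⟩ | ⟨u1, u2⟩
          · linarith
          · linarith
        · intro hv
          have hua : f^[i] d < a := hiff.mpr hv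
          rcases hu with ⟨u1, u2⟩ | ⟨u1, u2⟩
          · exact lt_of_le_of_ne u2 (hne' i hi)
          · linarith
      choose G hG1 hG2 using hstep
      let c0 : {d : ℝ // d ∈ Icc (0:ℝ) 1 ∧ f^[n] d ≤ d ∧
          ∀ i ≤ n, ((f^[i] d < a ↔ f^[i] c < a) ∧ f^[i] d ≠ a)} :=
        ⟨c, hc, hfn, fun i hi => ⟨Iff.rfl, hxne i hi⟩⟩
      let sq := fun k => G^[k] c0
      let cs : ℕ → ℝ := fun k => (sq k).1
      have hsq : ∀ k, sq (k+1) = G (sq k) := fun k => Function.iterate_succ_apply' G k c0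
      have hcs0 : cs 0 = c := rfl
      have hcs1 : ∀ k, cs (k+1) = (G (sq k)).1 := by
        intro k
        show (G^[k+1] c0).1 = _
        rw [Function.iterate_succ_apply' G k c0]
      have hcsle : ∀ k, cs k ≤ cs (k+1) := by
        intro k
        rw [hcs1 k]
        exact hG1 (sq k)
      have hret : ∀ k, f^[n] (cs (k+1)) = cs k := by
        intro k
        rw [hcs1 k]
        exact hG2 (sq k)
      have hHSk : ∀ k, cs k ∈ Icc (0:ℝ) 1 ∧ f^[n] (cs k) ≤ cs k ∧
          ∀ i ≤ n, ((f^[i] (cs k) < a ↔ f^[i] c < a) ∧ f^[i] (cs k) ≠ a) := fun k => (sq k).2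
      have hcslt : ∀ k, cs k < a := by
        intro k
        have h0 := ((hHSk k).2.2 0 (Nat.zero_le n)).1
        simp only [Function.iterate_zero_apply] at h0
        exact h0.mpr hca
      have hmono : Monotone cs := monotone_nat_of_le_succ hcsle
      have hbdd : BddAbove (Set.range cs) := ⟨a, by rintro _ ⟨k, rfl⟩; exact le_of_lt (hcslt k)⟩
      have htd : Filter.Tendsto cs Filter.atTop (nhds (⨆ k, cs k)) :=
        tendsto_atTop_ciSup hmono hbdd
      set cl := ⨆ k, cs k with hcldef
      have hcl_le : cl ≤ a := ciSup_le (fun k => le_of_lt (hcslt k))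
      have hc_le : c ≤ cl := by
        have := le_ciSup hbdd 0
        rwa [hcs0] at this
      have hclI : cl ∈ Icc (0:ℝ) 1 := ⟨le_trans hc.1 hc_le, le_trans hcl_le ha.2⟩
      have hcont : ∀ m : ℕ, ContinuousOn (f^[m]) (Icc (0:ℝ) 1) := by
        intro m
        induction m with
        | zero => simpa using continuousOn_id
        | succ m ih =>
          rw [Function.iterate_succ']
          exact hf.comp ih (hmaps.iterate m)
      have htdW : Filter.Tendsto cs Filter.atTop (nhdsWithin cl (Icc (0:ℝ) 1)) := by
        rw [tendsto_nhdsWithin_iff]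
        exact ⟨htd, Filter.Eventually.of_forall (fun k => (hHSk k).1)⟩
      have hit_tendsto : ∀ m : ℕ, Filter.Tendsto (fun k => f^[m] (cs k)) Filter.atTop
          (nhds (f^[m] cl)) := fun m => Filter.Tendsto.comp (hcont m cl hclI) htdW
      have hfixcl : f^[n] cl = cl := by
        have h1 : Filter.Tendsto (fun k => f^[n] (cs (k+1))) Filter.atTop (nhds (f^[n] cl)) :=
          (hit_tendsto n).comp (Filter.tendsto_add_atTop_nat 1)
        have h2 : Filter.Tendsto (fun k => f^[n] (cs (k+1))) Filter.atTop (nhds cl) := by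
          have he : (fun k => f^[n] (cs (k+1))) = fun k => cs k := funext hret
          rw [he]
          exact htd
        exact tendsto_nhds_unique h1 h2
      by_cases hcla : cl < a
      · -- success
        have hclne : cl ≠ a := ne_of_lt hcla
        have hne_it : ∀ i, f^[i] cl ≠ a := my_iter_ne hfix hn hfixcl hclne
        have hsides : ∀ i ≤ n, (f^[i] cl < a ↔ f^[i] c < a) := by
          intro i hi
          have hlim := hit_tendsto i
          rcases lt_or_gt_of_ne (hxne i hi) with hx | hx
          · constructor
            · intro _; exact hx
            · intro _
              have hall : ∀ k, f^[i] (cs k) < a := fun k => ((hHSk k).2.2 i hi).1.mpr hx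
              have hle : f^[i] cl ≤ a :=
                le_of_tendsto hlim (Filter.Eventually.of_forall (fun k => le_of_lt (hall k)))
              exact lt_of_le_of_ne hle (hne_it i)
          · constructor
            · intro hlt
              exfalso
              have hall : ∀ k, a < f^[i] (cs k) := by
                intro k
                have h1 := ((hHSk k).2.2 i hi).1
                have h2 := ((hHSk k).2.2 i hi).2
                have hnl : ¬ f^[i] (cs k) < a :=
                  fun hh => absurd (h1.mp hh) (not_lt.2 (le_of_lt hx))
                exact lt_of_le_of_ne (not_lt.1 hnl) (Ne.symm h2)
              have hge : a ≤ f^[i] cl :=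
                ge_of_tendsto hlim (Filter.Eventually.of_forall (fun k => le_of_lt (hall k)))
              linarith
            · intro h; exact absurd h (not_lt.2 (le_of_lt hx))
        obtain ⟨r1, r2, r3⟩ := my_rot f a hf hmaps hfix huniq cl n hn hclI hfixcl hclne
        refine ⟨cl, hclI, r1, r2, ?_⟩
        rw [r3]
        have hcardeq : ((Finset.range n).filter
            (fun i => ¬((f^[i] cl < a) ↔ (f^[i+1] cl < a)))).card
            = ((Finset.range n).filter (fun i =>
              (f^[i] c < a ∧ a < f^[i+1] c) ∨ (a < f^[i] c ∧ f^[i+1] c < a))).card := by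
          congr 1
          apply Finset.filter_congr
          intro i hi
          rw [Finset.mem_range] at hi
          have s1 := hsides i (by omega)
          have s2 := hsides (i+1) (by omega)
          have n1 := hxne i (by omega)
          have n2 := hxne (i+1) (by omega)
          constructor
          · intro hn12
            rcases lt_or_gt_of_ne n1 with u | u <;> rcases lt_or_gt_of_ne n2 with v | v
            · exact absurd (by rw [s1, s2]; exact iff_of_true u v) hn12
            · exact Or.inl ⟨u, v⟩
            · exact Or.inr ⟨u, v⟩
            · refine absurd ?_ hn12
              rw [s1, s2]
              exact iff_of_false (not_lt.2 (le_of_lt u)) (not_lt.2 (le_of_lt v))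
          · rintro (⟨u, v⟩ | ⟨u, v⟩) hiff
            · have := s2.mp (hiff.mp (s1.mpr u)); linarith
            · have := s1.mp (hiff.mpr (s2.mpr v)); linarith
        rw [hcardeq, hp]
      · -- cl = a : contradiction with piecewise monotonicity
        exfalso
        have hcleq : cl = a := le_antisymm hcl_le (not_lt.1 hcla)
        have hex0 : ∃ i, i < n ∧ ¬((f^[i] c < a ∧ a < f^[i+1] c) ∨
            (a < f^[i] c ∧ f^[i+1] c < a)) := by
          by_contra hno
          push_neg at hno
          have hfeq : (Finset.range n).filter (fun i =>
              (f^[i] c < a ∧ a < f^[i+1] c) ∨ (a < f^[i] c ∧ f^[i+1] c < a))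
              = Finset.range n :=
            Finset.filter_eq_self.2 (fun i hi => hno i (Finset.mem_range.1 hi))
          rw [hp, hfeq, Finset.card_range] at hplt
          omega
        obtain ⟨i0, hi0n, hi0⟩ := hex0
        have b1 := hxne i0 (by omega)
        have b2 := hxne (i0+1) (by omega)
        have hsame : (f^[i0] c < a ∧ f^[i0+1] c < a) ∨ (a < f^[i0] c ∧ a < f^[i0+1] c) := by
          rcases lt_or_gt_of_ne b1 with u | u <;> rcases lt_or_gt_of_ne b2 with v | v
          · exact Or.inl ⟨u, v⟩
          · exact absurd (Or.inl ⟨u, v⟩) hi0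
          · exact absurd (Or.inr ⟨u, v⟩) hi0
          · exact Or.inr ⟨u, v⟩
        have hTm : ∀ m : ℕ, Filter.Tendsto (fun k => f^[m] (cs (k+1))) Filter.atTop (nhds a) := by
          intro m
          have h1 : Filter.Tendsto (fun k => f^[m] (cs (k+1))) Filter.atTop
              (nhds (f^[m] cl)) := (hit_tendsto m).comp (Filter.tendsto_add_atTop_nat 1)
          rwa [hcleq, Function.iterate_fixed hfix] at h1
        have hseq_side : ∀ m ≤ n, ∀ k, (f^[m] (cs (k+1)) < a ↔ f^[m] c < a) ∧
            f^[m] (cs (k+1)) ≠ a := fun m hm k => (hHSk (k+1)).2.2 m hm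
        have hgt_of : ∀ m, m ≤ n → ∀ k, a < f^[m] c → a < f^[m] (cs (k+1)) := by
          intro m hm k hgt
          have h1 := (hseq_side m hm k).1
          have h2 := (hseq_side m hm k).2
          have hnl : ¬ f^[m] (cs (k+1)) < a :=
            fun hh => absurd (h1.mp hh) (not_lt.2 (le_of_lt hgt))
          exact lt_of_le_of_ne (not_lt.1 hnl) (Ne.symm h2)
        have hlt_of : ∀ m, m ≤ n → ∀ k, f^[m] c < a → f^[m] (cs (k+1)) < a :=
          fun m hm k h => ((hseq_side m hm k).1).mpr h
        obtain ⟨N, t, hst, ht0, htl, hlaps⟩ := hpm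
        rcases hsame with ⟨u, v⟩ | ⟨u, v⟩
        · -- LEFT: lap ending at/above a from the left
          have hLlap : ∃ iL : Fin N, t iL.castSucc < a ∧ a ≤ t iL.succ := by
            have hne : (Finset.univ.filter (fun j : Fin (N+1) => t j < a)).Nonempty := by
              refine ⟨0, ?_⟩
              rw [Finset.mem_filter]
              exact ⟨Finset.mem_univ _, by rw [ht0]; exact ha0⟩
            set M := (Finset.univ.filter (fun j : Fin (N+1) => t j < a)).max' hne with hM
            have hMmem := Finset.max'_mem _ hne
            rw [Finset.mem_filter] at hMmem
            have hMlt : t M < a := hMmem.2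
            have hMne : M ≠ Fin.last N := by
              intro he
              rw [he, htl] at hMlt
              linarith
            have hMval : M.val < N := by
              have h1 := M.isLt
              rcases Nat.lt_or_ge M.val N with h | h
              · exact h
              · exfalso; exact hMne (Fin.ext (by simp [Fin.last]; omega))
            refine ⟨⟨M.val, hMval⟩, ?_, ?_⟩
            · have he : (⟨M.val, hMval⟩ : Fin N).castSucc = M := Fin.ext (by simp)
              rw [he]; exact hMlt
            · by_contra hh
              push_neg at hh
              have hmem : (⟨M.val, hMval⟩ : Fin N).succ ∈
                  Finset.univ.filter (fun j : Fin (N+1) => t j < a) := by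
                rw [Finset.mem_filter]; exact ⟨Finset.mem_univ _, hh⟩
              have hle2 := Finset.le_max' _ _ hmem
              rw [← hM] at hle2
              have hv2 : M.val + 1 ≤ M.val := by simpa [Fin.le_def] using hle2
              omega
          obtain ⟨iL, hl1, hl2⟩ := hLlap
          have hAev := (hTm i0).eventually (Ioi_mem_nhds hl1)
          have hQev := (hTm 0).eventually (Ioi_mem_nhds hl1)
          obtain ⟨k, hk1, hk2⟩ := (hAev.and hQev).exists
          have hAlt : f^[i0] (cs (k+1)) < a := hlt_of i0 (by omega) k u
          have hQlt : f^[0] (cs (k+1)) < a := hlt_of 0 (Nat.zero_le n) k (by simpa using hca)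
          have hA1 : f^[i0+1] (cs (k+1)) < a := hlt_of (i0+1) (by omega) k v
          have hQ1 : a < f^[1] (cs (k+1)) := hgt_of 1 hn k hx1
          have hAmem : f^[i0] (cs (k+1)) ∈ Icc (t iL.castSucc) (t iL.succ) :=
            ⟨le_of_lt hk1, le_trans (le_of_lt hAlt) hl2⟩
          have hQmem : f^[0] (cs (k+1)) ∈ Icc (t iL.castSucc) (t iL.succ) :=
            ⟨le_of_lt hk2, le_trans (le_of_lt hQlt) hl2⟩
          have hamem : a ∈ Icc (t iL.castSucc) (t iL.succ) := ⟨le_of_lt hl1, hl2⟩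
          rcases hlaps iL with hmon | hant
          · have hle3 := hmon hQmem hamem (le_of_lt hQlt)
            rw [hfix] at hle3
            rw [show f (f^[0] (cs (k+1))) = f^[1] (cs (k+1)) from
              (Function.iterate_succ_apply' f 0 _).symm] at hle3
            linarith
          · have hle3 := hant hAmem hamem (le_of_lt hAlt)
            rw [hfix] at hle3
            rw [show f (f^[i0] (cs (k+1))) = f^[i0+1] (cs (k+1)) from
              (Function.iterate_succ_apply' f i0 _).symm] at hle3
            linarith
        · -- RIGHT: lap starting at/below a to the right
          have hRlap : ∃ iR : Fin N, t iR.castSucc ≤ a ∧ a < t iR.succ := by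
            have hne : (Finset.univ.filter (fun j : Fin (N+1) => a < t j)).Nonempty := by
              refine ⟨Fin.last N, ?_⟩
              rw [Finset.mem_filter]
              exact ⟨Finset.mem_univ _, by rw [htl]; exact ha1⟩
            set M := (Finset.univ.filter (fun j : Fin (N+1) => a < t j)).min' hne with hM
            have hMmem := Finset.min'_mem _ hne
            rw [Finset.mem_filter] at hMmem
            have hMgt : a < t M := hMmem.2
            have hMne : M ≠ 0 := by
              intro he
              rw [he, ht0] at hMgt
              linarith
            have hMval : 0 < M.val := by
              rcases Nat.eq_zero_or_pos M.val with h | h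
              · exfalso; exact hMne (Fin.ext (by simp [h]))
              · exact h
            have hMlt : M.val - 1 < N := by
              have := M.isLt
              omega
            refine ⟨⟨M.val - 1, hMlt⟩, ?_, ?_⟩
            · by_contra hh
              push_neg at hh
              have hmem : (⟨M.val - 1, hMlt⟩ : Fin N).castSucc ∈
                  Finset.univ.filter (fun j : Fin (N+1) => a < t j) := by
                rw [Finset.mem_filter]; exact ⟨Finset.mem_univ _, hh⟩
              have hle2 := Finset.min'_le _ _ hmem
              rw [← hM] at hle2
              have := Fin.le_def.mp hle2
              simp [Fin.castSucc] at this
              omega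
            · have he : (⟨M.val - 1, hMlt⟩ : Fin N).succ = M := Fin.ext (by simp; omega)
              rw [he]; exact hMgt
          obtain ⟨iR, hr1, hr2⟩ := hRlap
          have hSne : ((Finset.range n).filter (fun i => a < f^[i] c)).Nonempty :=
            ⟨i0, Finset.mem_filter.2 ⟨Finset.mem_range.2 hi0n, u⟩⟩
          set j0 := ((Finset.range n).filter (fun i => a < f^[i] c)).max' hSne with hj0def
          have hj0mem := Finset.max'_mem _ hSne
          rw [Finset.mem_filter, Finset.mem_range] at hj0mem
          obtain ⟨hj0n, hj0gt⟩ := hj0mem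
          have hj1lt : f^[j0+1] c < a := by
            rcases Nat.eq_or_lt_of_le (show j0+1 ≤ n from hj0n) with he | hlt
            · rw [he]; exact hxn_lt
            · have hnm : j0+1 ∉ (Finset.range n).filter (fun i => a < f^[i] c) := by
                intro hmem
                have := Finset.le_max' _ _ hmem
                rw [← hj0def] at this
                omega
              rw [Finset.mem_filter, Finset.mem_range] at hnm
              push_neg at hnm
              have hnlt := hnm hlt
              exact lt_of_le_of_ne hnlt (hxne (j0+1) (by omega))
          have hPev := (hTm i0).eventually (Iio_mem_nhds hr2)
          have hWev := (hTm j0).eventually (Iio_mem_nhds hr2)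
          obtain ⟨k, hk1, hk2⟩ := (hPev.and hWev).exists
          have hPgt : a < f^[i0] (cs (k+1)) := hgt_of i0 (by omega) k u
          have hWgt : a < f^[j0] (cs (k+1)) := hgt_of j0 (by omega) k hj0gt
          have hP1 : a < f^[i0+1] (cs (k+1)) := by
            have : i0+1 ≤ n := by omega
            exact hgt_of (i0+1) this k v
          have hW1 : f^[j0+1] (cs (k+1)) < a := hlt_of (j0+1) (by omega) k hj1lt
          have hPmem : f^[i0] (cs (k+1)) ∈ Icc (t iR.castSucc) (t iR.succ) :=
            ⟨le_trans hr1 (le_of_lt hPgt), le_of_lt hk1⟩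
          have hWmem : f^[j0] (cs (k+1)) ∈ Icc (t iR.castSucc) (t iR.succ) :=
            ⟨le_trans hr1 (le_of_lt hWgt), le_of_lt hk2⟩
          have hamem : a ∈ Icc (t iR.castSucc) (t iR.succ) := ⟨hr1, le_of_lt hr2⟩
          rcases hlaps iR with hmon | hant
          · have hle3 := hmon hamem hWmem (le_of_lt hWgt)
            rw [hfix] at hle3
            rw [show f (f^[j0] (cs (k+1))) = f^[j0+1] (cs (k+1)) from
              (Function.iterate_succ_apply' f j0 _).symm] at hle3
            linarith
          · have hle3 := hant hamem hPmem (le_of_lt hPgt)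
            rw [hfix] at hle3
            rw [show f (f^[i0] (cs (k+1))) = f^[i0+1] (cs (k+1)) from
              (Function.iterate_succ_apply' f i0 _).symm] at hle3
            linarith
  obtain ⟨y, hy1, hy2, hy3, hy4⟩ := hex
  exact ⟨heven, ⟨y, hy1, hy2, hy3, hy4⟩, subset_closure ⟨y, hy1, hy2, hy3, hy4⟩⟩
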